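/- arXiv:2112.00526 — 2 statements merged into one kernel-verified Lean document; each statement's English description precedes it below -/
import Mathlib

section
/- For every topological space M and every homeomorphism f : M → M, the induced map p : M_f → ℝ/ℤ is well defined, continuous, and locally trivial with fiber M: every point θ ∈ ℝ/ℤ has an open neighborhood W together with a homeomorphism Φ : p⁻¹(W) → W × M such that the first component of Φ agrees with p. In particular M_f is a fiber bundle over the circle with fiber M. -/
/-- The orbit relation on `M × ℝ` of the ℤ-action `n • (x, s) = (fⁿ x, s - n)`.
The mapping torus `M_f` is the quotient `Quot (mtRel f)`. -/
def mtRel {M : Type*} [TopologicalSpace M] (f : M ≃ₜ M) (p q : M × ℝ) : Prop :=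
  ∃ n : ℤ, ((f.toEquiv ^ n) p.1, p.2 - (n : ℝ)) = q

namespace MappingTorusAux

variable {M : Type*} [TopologicalSpace M] (f : M ≃ₜ M)

lemma continuous_zpow : ∀ n : ℤ, Continuous (f.toEquiv ^ n) := by
  intro n
  induction n using Int.induction_on with
  | zero => simpa using continuous_id
  | succ k ih =>
      have h : ⇑(f.toEquiv ^ ((k : ℤ) + 1)) = ⇑(f.toEquiv ^ (k : ℤ)) ∘ ⇑f.toEquiv := by
        rw [zpow_add_one]; rfl
      rw [h]; exact ih.comp f.continuous
  | pred k ih =>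
      have h : ⇑(f.toEquiv ^ (-(k : ℤ) - 1)) = ⇑(f.toEquiv ^ (-(k : ℤ))) ∘ ⇑f.symm.toEquiv := by
        rw [zpow_sub_one]; rfl
      rw [h]; exact ih.comp f.symm.continuous

/-- The `n`-th power of `f` as a homeomorphism, with underlying equiv `f.toEquiv ^ n`. -/
def zpowHomeo (n : ℤ) : M ≃ₜ M where
  toEquiv := f.toEquiv ^ n
  continuous_toFun := continuous_zpow f n
  continuous_invFun := by
    have h : (f.toEquiv ^ n).symm = f.toEquiv ^ (-n) := by rw [zpow_neg]; rfl
    show Continuous (f.toEquiv ^ n).symm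
    rw [h]; exact continuous_zpow f (-n)

lemma mtRel_equivalence : Equivalence (mtRel f) := by
  constructor
  · intro a
    exact ⟨0, by simp⟩
  · rintro a b ⟨n, rfl⟩
    refine ⟨-n, ?_⟩
    refine Prod.ext ?_ ?_
    · show (f.toEquiv ^ (-n)) ((f.toEquiv ^ n) a.1) = a.1
      simp [← Equiv.Perm.mul_apply, ← zpow_add]
    · show a.2 - (n : ℝ) - ((-n : ℤ) : ℝ) = a.2
      push_cast; ring
  · rintro a b c ⟨n, rfl⟩ ⟨m, rfl⟩
    refine ⟨n + m, ?_⟩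
    refine Prod.ext ?_ ?_
    · show (f.toEquiv ^ (n + m)) a.1 = (f.toEquiv ^ m) ((f.toEquiv ^ n) a.1)
      rw [add_comm, zpow_add, Equiv.Perm.mul_apply]
    · show a.2 - ((n + m : ℤ) : ℝ) = a.2 - (n : ℝ) - (m : ℝ)
      push_cast; ring

lemma mk_eq_mk {a b : M × ℝ} :
    Quot.mk (mtRel f) a = Quot.mk (mtRel f) b ↔ mtRel f a b :=
  Quot.eq.trans (mtRel_equivalence f).eqvGen_iff

lemma isOpenMap_mk : IsOpenMap (Quot.mk (mtRel f)) := by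
  intro U hU
  rw [isOpen_coinduced]
  have h : Quot.mk (mtRel f) ⁻¹' (Quot.mk (mtRel f) '' U)
      = ⋃ n : ℤ, (fun z : M × ℝ => ((f.toEquiv ^ n) z.1, z.2 - (n : ℝ))) '' U := by
    ext z
    simp only [Set.mem_preimage, Set.mem_image, Set.mem_iUnion]
    constructor
    · rintro ⟨u, hu, h⟩
      obtain ⟨n, hn⟩ := (mk_eq_mk f).mp h
      exact ⟨n, u, hu, hn⟩
    · rintro ⟨n, u, hu, hn⟩
      exact ⟨u, hu, (mk_eq_mk f).mpr ⟨n, hn⟩⟩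
  rw [h]
  exact isOpen_iUnion fun n =>
    ((zpowHomeo f n).prodCongr (Homeomorph.subRight (n : ℝ))).isOpenMap U hU

lemma coe_eq_coe_iff {s u : ℝ} :
    ((s : AddCircle (1 : ℝ)) = (u : AddCircle (1 : ℝ))) ↔ ∃ k : ℤ, u - s = (k : ℝ) := by
  rw [show ((s : AddCircle (1 : ℝ)) = (u : AddCircle (1 : ℝ)))
      ↔ -s + u ∈ AddSubgroup.zmultiples (1 : ℝ) from QuotientAddGroup.eq]
  simp only [AddSubgroup.mem_zmultiples_iff, zsmul_eq_mul, mul_one, neg_add_eq_sub]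
  exact exists_congr fun k => eq_comm

end MappingTorusAux

open MappingTorusAux in
/-- The induced map `p : M_f → ℝ/ℤ` is well defined, continuous, and
locally trivial with fiber `M`: every `θ ∈ ℝ/ℤ` has an open neighborhood `W` and a
homeomorphism `Φ : p⁻¹(W) ≃ₜ W × M` whose first component agrees with `p`. -/
theorem mapping_torus_bundle_over_circle
    (M : Type*) [TopologicalSpace M] (f : M ≃ₜ M) :
    ∃ p : Quot (mtRel f) → AddCircle (1 : ℝ),
      (∀ (x : M) (s : ℝ), p (Quot.mk (mtRel f) (x, s)) = (s : AddCircle (1 : ℝ))) ∧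
      Continuous p ∧
      ∀ θ : AddCircle (1 : ℝ), ∃ W : Set (AddCircle (1 : ℝ)), IsOpen W ∧ θ ∈ W ∧
        ∃ Φ : (p ⁻¹' W) ≃ₜ W × M,
          ∀ z : p ⁻¹' W, ((Φ z).1 : AddCircle (1 : ℝ)) = p (z : Quot (mtRel f)) := by
  have hwd : ∀ a b : M × ℝ, mtRel f a b →
      ((a.2 : AddCircle (1 : ℝ)) = (b.2 : AddCircle (1 : ℝ))) := by
    rintro a b ⟨n, rfl⟩
    exact coe_eq_coe_iff.mpr ⟨-n, by push_cast; ring⟩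
  set p : Quot (mtRel f) → AddCircle (1 : ℝ) :=
    Quot.lift (fun z : M × ℝ => (z.2 : AddCircle (1 : ℝ))) hwd with hp
  refine ⟨p, fun x s => rfl, ?_, ?_⟩
  · exact continuous_quot_lift _ (continuous_quotient_mk'.comp continuous_snd)
  intro θ
  obtain ⟨t, rfl⟩ := Quotient.exists_rep θ
  set S : Set ℝ := Set.Ioo (t - 1/2) (t + 1/2) with hSdef
  have hS : IsOpen S := isOpen_Ioo
  set W : Set (AddCircle (1 : ℝ)) := (fun u : ℝ => (u : AddCircle (1 : ℝ))) '' S with hW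
  refine ⟨W, QuotientAddGroup.isOpenMap_coe S hS, ⟨t, by constructor <;> simp, rfl⟩, ?_⟩

  have hint : ∀ k : ℤ, -1 < (k:ℝ) → (k:ℝ) < 1 → k = 0 := by
    intro k h1 h2
    have h1' : (-1:ℤ) < k := by exact_mod_cast h1
    have h2' : k < (1:ℤ) := by exact_mod_cast h2
    omega
  -- the chart on the base: `S ≃ₜ W`
  have g0cont : Continuous (fun u : S => ((u : ℝ) : AddCircle (1 : ℝ))) :=
    continuous_quotient_mk'.comp continuous_subtype_val
  have g0inj : Function.Injective (fun u : S => ((u : ℝ) : AddCircle (1 : ℝ))) := by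
    rintro ⟨u, hu1, hu2⟩ ⟨v, hv1, hv2⟩ h
    obtain ⟨k, hk⟩ := coe_eq_coe_iff.mp h
    have hk0 : k = 0 := hint k (by simp only at hk ⊢; linarith) (by simp only at hk ⊢; linarith)
    rw [hk0] at hk
    simp only [Int.cast_zero, sub_eq_zero] at hk
    exact Subtype.ext hk.symm
  have g0open : IsOpenMap (fun u : S => ((u : ℝ) : AddCircle (1 : ℝ))) := by
    intro U hU
    have himg : (fun u : S => ((u : ℝ) : AddCircle (1 : ℝ))) '' U
        = (fun u : ℝ => (u : AddCircle (1 : ℝ))) '' (Subtype.val '' U) :=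
      (Set.image_image _ _ _).symm
    rw [himg]
    exact QuotientAddGroup.isOpenMap_coe _ (hS.isOpenMap_subtype_val U hU)
  have hrangeg : Set.range (fun u : S => ((u : ℝ) : AddCircle (1 : ℝ))) = W :=
    (Set.image_eq_range _ _).symm
  let g : S ≃ₜ W :=
    (Topology.IsEmbedding.toHomeomorph (f := _)
      (Topology.IsOpenEmbedding.of_continuous_injective_isOpenMap g0cont g0inj g0open).toIsEmbedding).trans
      (Homeomorph.setCongr hrangeg)
  -- the chart upstairs: `M × S ≃ₜ p ⁻¹' W`
  set ψ0 : M × S → Quot (mtRel f) := fun z => Quot.mk (mtRel f) (z.1, (z.2 : ℝ)) with hψ0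
  have ψcont : Continuous ψ0 :=
    (continuous_quot_mk).comp (continuous_fst.prodMk (continuous_subtype_val.comp continuous_snd))
  have ψinj : Function.Injective ψ0 := by
    rintro ⟨x, u, hu1, hu2⟩ ⟨y, v, hv1, hv2⟩ h
    obtain ⟨n, hn⟩ := (mk_eq_mk f).mp h
    rw [Prod.ext_iff] at hn
    obtain ⟨hn1, hn2⟩ := hn
    simp only at hn1 hn2
    have hn0 : n = 0 := hint n (by linarith) (by linarith)
    rw [hn0] at hn1 hn2
    simp only [zpow_zero, Equiv.Perm.coe_one, id_eq, Int.cast_zero, sub_zero] at hn1 hn2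
    exact Prod.ext hn1 (Subtype.ext hn2)
  have ψopen : IsOpenMap ψ0 := by
    intro U hU
    have himg : ψ0 '' U
        = Quot.mk (mtRel f) '' ((Prod.map id (Subtype.val : S → ℝ)) '' U) := by
      rw [Set.image_image]; rfl
    rw [himg]
    exact isOpenMap_mk f _ ((IsOpenMap.id.prodMap hS.isOpenMap_subtype_val) U hU)
  have hrangeψ : Set.range ψ0 = p ⁻¹' W := by
    ext z
    constructor
    · rintro ⟨⟨x, u, hu⟩, rfl⟩
      exact ⟨u, hu, rfl⟩
    · intro hz
      obtain ⟨⟨x, s⟩, rfl⟩ := Quot.exists_rep z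
      obtain ⟨u, hu, hus⟩ := hz
      obtain ⟨k, hk⟩ := coe_eq_coe_iff.mp hus
      refine ⟨((f.toEquiv ^ k) x, ⟨u, hu⟩), ?_⟩
      show Quot.mk (mtRel f) ((f.toEquiv ^ k) x, u) = Quot.mk (mtRel f) (x, s)
      exact ((mk_eq_mk f).mpr ⟨k, by rw [Prod.mk.injEq]; exact ⟨rfl, by linarith⟩⟩).symm
  let ψ : (M × S) ≃ₜ (p ⁻¹' W) :=
    (Topology.IsEmbedding.toHomeomorph (f := ψ0)
      (Topology.IsOpenEmbedding.of_continuous_injective_isOpenMap ψcont ψinj ψopen).toIsEmbedding).trans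
      (Homeomorph.setCongr hrangeψ)
  refine ⟨ψ.symm.trans ((Homeomorph.prodComm M S).trans (g.prodCongr (Homeomorph.refl M))), ?_⟩
  intro z
  obtain ⟨a, rfl⟩ := ψ.surjective z
  simp only [Homeomorph.trans_apply, Homeomorph.symm_apply_apply]
  rfl
end

section
/- Let M be a topological space, f : M → M a homeomorphism, and n ≥ 1 an integer. Consider the quotient space (M × ℝ)/(nℤ) of M × ℝ by the action of the subgroup nℤ ⊆ ℤ (acting by m • (x, s) = (fᵐ(x), s − m) for m ∈ nℤ). Then the natural map (M × ℝ)/(nℤ) → M_f induced by the identity of M × ℝ is a covering map, and each of its fibers has exactly n elements (an n-fold covering). -/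
/-- The orbit relation on `M × ℝ` of the action of the subgroup `nℤ ⊆ ℤ`,
`m • (x, s) = (fᵐ x, s - m)` for `m ∈ nℤ`. -/
def mtRelN {M : Type*} [TopologicalSpace M] (f : M ≃ₜ M) (n : ℕ) (p q : M × ℝ) : Prop :=
  ∃ m : ℤ, ((f.toEquiv ^ ((n : ℤ) * m)) p.1, p.2 - (((n : ℤ) * m : ℤ) : ℝ)) = q

open Set

section Aux

variable {M : Type*} [TopologicalSpace M] (f : M ≃ₜ M)

private lemma contPow (g : M ≃ₜ M) : ∀ k : ℕ, Continuous ⇑(g.toEquiv ^ k)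
  | 0 => by simpa [pow_zero] using continuous_id
  | (k + 1) => by
      rw [pow_succ]
      have h : ⇑(g.toEquiv ^ k * g.toEquiv) = ⇑(g.toEquiv ^ k) ∘ ⇑g.toEquiv :=
        Equiv.Perm.coe_mul _ _
      rw [h]
      exact (contPow g k).comp g.continuous

private lemma contZpow : ∀ m : ℤ, Continuous ⇑(f.toEquiv ^ m)
  | Int.ofNat k => by
      rw [Int.ofNat_eq_coe, zpow_natCast]; exact contPow f k
  | Int.negSucc k => by
      rw [zpow_negSucc, ← inv_pow]
      have h : f.toEquiv⁻¹ = f.symm.toEquiv := rfl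
      rw [h]
      exact contPow f.symm (k + 1)

/-- The homeomorphism `(x, s) ↦ (fᵐ x, s - m)` of `M × ℝ`. -/
private def shiftH (m : ℤ) : M × ℝ ≃ₜ M × ℝ :=
  (Homeomorph.mk (f.toEquiv ^ m) (contZpow f m) (by
      show Continuous ⇑(f.toEquiv ^ m).symm
      have h : ⇑(f.toEquiv ^ m).symm = ⇑(f.toEquiv ^ (-m)) := by
        rw [zpow_neg]; rfl
      rw [h]; exact contZpow f (-m))).prodCongr
    (Homeomorph.subRight (m : ℝ))

private lemma shiftH_apply (m : ℤ) (p : M × ℝ) :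
    shiftH f m p = ((f.toEquiv ^ m) p.1, p.2 - (m : ℝ)) := rfl

private lemma shiftH_snd (m : ℤ) (p : M × ℝ) :
    (shiftH f m p).2 = p.2 - (m : ℝ) := rfl

private lemma shiftH_zero (p : M × ℝ) : shiftH f 0 p = p := by
  rw [shiftH_apply]; simp

private lemma shiftH_shiftH (a b : ℤ) (p : M × ℝ) :
    shiftH f a (shiftH f b p) = shiftH f (a + b) p := by
  simp only [shiftH_apply]
  refine Prod.ext ?_ ?_
  · show (f.toEquiv ^ a) ((f.toEquiv ^ b) p.1) = (f.toEquiv ^ (a + b)) p.1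
    rw [← Equiv.Perm.mul_apply, ← zpow_add]
  · show p.2 - (b : ℝ) - (a : ℝ) = p.2 - ((a + b : ℤ) : ℝ)
    push_cast; ring

private lemma mtRel_iff (p q : M × ℝ) : mtRel f p q ↔ ∃ m : ℤ, shiftH f m p = q := Iff.rfl

private lemma mtRelN_iff (n : ℕ) (p q : M × ℝ) :
    mtRelN f n p q ↔ ∃ m : ℤ, shiftH f ((n : ℤ) * m) p = q := Iff.rfl

private lemma mtRel_equivalence : Equivalence (mtRel f) := by
  constructor
  · intro p; exact (mtRel_iff f p p).2 ⟨0, shiftH_zero f p⟩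
  · intro p q h
    obtain ⟨m, rfl⟩ := (mtRel_iff f p q).1 h
    refine (mtRel_iff f _ _).2 ⟨-m, ?_⟩
    rw [shiftH_shiftH, neg_add_cancel, shiftH_zero]
  · intro p q r h1 h2
    obtain ⟨m1, rfl⟩ := (mtRel_iff f p q).1 h1
    obtain ⟨m2, rfl⟩ := (mtRel_iff f _ _).1 h2
    exact (mtRel_iff f _ _).2 ⟨m2 + m1, (shiftH_shiftH f m2 m1 p).symm⟩

private lemma mtRelN_equivalence (n : ℕ) : Equivalence (mtRelN f n) := by
  constructor
  · intro p
    refine (mtRelN_iff f n p p).2 ⟨0, ?_⟩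
    rw [mul_zero, shiftH_zero]
  · intro p q h
    obtain ⟨m, rfl⟩ := (mtRelN_iff f n p q).1 h
    refine (mtRelN_iff f n _ _).2 ⟨-m, ?_⟩
    rw [shiftH_shiftH]
    have h0 : (n : ℤ) * (-m) + (n : ℤ) * m = 0 := by ring
    rw [h0, shiftH_zero]
  · intro p q r h1 h2
    obtain ⟨m1, rfl⟩ := (mtRelN_iff f n p q).1 h1
    obtain ⟨m2, rfl⟩ := (mtRelN_iff f n _ _).1 h2
    refine (mtRelN_iff f n _ _).2 ⟨m2 + m1, ?_⟩
    rw [shiftH_shiftH]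
    congr 1
    ring_nf

private lemma mkX_eq {p q : M × ℝ} :
    Quot.mk (mtRel f) p = Quot.mk (mtRel f) q ↔ mtRel f p q := by
  rw [Quot.eq]
  exact (mtRel_equivalence f).eqvGen_iff

private lemma mkE_eq (n : ℕ) {p q : M × ℝ} :
    Quot.mk (mtRelN f n) p = Quot.mk (mtRelN f n) q ↔ mtRelN f n p q := by
  rw [Quot.eq]
  exact (mtRelN_equivalence f n).eqvGen_iff

private lemma mkX_shiftH (m : ℤ) (p : M × ℝ) :
    Quot.mk (mtRel f) (shiftH f m p) = Quot.mk (mtRel f) p := by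
  refine (mkX_eq f).2 ((mtRel_iff f _ _).2 ⟨-m, ?_⟩)
  rw [shiftH_shiftH, neg_add_cancel, shiftH_zero]

private lemma mkE_shiftH (n : ℕ) (d : ℤ) (hd : (n : ℤ) ∣ d) (p : M × ℝ) :
    Quot.mk (mtRelN f n) (shiftH f d p) = Quot.mk (mtRelN f n) p := by
  obtain ⟨c, rfl⟩ := hd
  refine (mkE_eq f n).2 ((mtRelN_iff f n _ _).2 ⟨-c, ?_⟩)
  rw [shiftH_shiftH]
  have h0 : (n : ℤ) * (-c) + (n : ℤ) * c = 0 := by ring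
  rw [h0, shiftH_zero]

private lemma satX (V : Set (M × ℝ)) :
    Quot.mk (mtRel f) ⁻¹' (Quot.mk (mtRel f) '' V) = ⋃ m : ℤ, shiftH f m '' V := by
  ext p
  simp only [mem_preimage, mem_image, mem_iUnion]
  constructor
  · rintro ⟨v, hv, hvq⟩
    obtain ⟨m, rfl⟩ := (mtRel_iff f v p).1 ((mkX_eq f).1 hvq)
    exact ⟨m, v, hv, rfl⟩
  · rintro ⟨m, v, hv, rfl⟩
    exact ⟨v, hv, (mkX_eq f).2 ((mtRel_iff f _ _).2 ⟨m, rfl⟩)⟩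

private lemma satE (n : ℕ) (V : Set (M × ℝ)) :
    Quot.mk (mtRelN f n) ⁻¹' (Quot.mk (mtRelN f n) '' V) =
      ⋃ m : ℤ, shiftH f ((n : ℤ) * m) '' V := by
  ext p
  simp only [mem_preimage, mem_image, mem_iUnion]
  constructor
  · rintro ⟨v, hv, hvq⟩
    obtain ⟨m, rfl⟩ := (mtRelN_iff f n v p).1 ((mkE_eq f n).1 hvq)
    exact ⟨m, v, hv, rfl⟩
  · rintro ⟨m, v, hv, rfl⟩
    exact ⟨v, hv, (mkE_eq f n).2 ((mtRelN_iff f n _ _).2 ⟨m, rfl⟩)⟩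

private lemma isOpenMap_mkX : IsOpenMap (Quot.mk (mtRel f)) := by
  intro V hV
  rw [← isQuotientMap_quot_mk.isOpen_preimage, satX]
  exact isOpen_iUnion fun m => (shiftH f m).isOpenMap V hV

private lemma isOpenMap_mkE (n : ℕ) : IsOpenMap (Quot.mk (mtRelN f n)) := by
  intro V hV
  rw [← isQuotientMap_quot_mk.isOpen_preimage, satE]
  exact isOpen_iUnion fun m => (shiftH f ((n : ℤ) * m)).isOpenMap V hV

/-- Continuity on an open set can be checked after composing with a surjective
continuous open map. -/
private lemma contOn_of_comp {A B C : Type*} [TopologicalSpace A] [TopologicalSpace B]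
    [TopologicalSpace C] {Q : A → B} (hQc : Continuous Q) (hQo : IsOpenMap Q)
    (hQs : Function.Surjective Q) {g : B → C} {T : Set B} (hT : IsOpen T)
    (h : ContinuousOn (g ∘ Q) (Q ⁻¹' T)) : ContinuousOn g T := by
  intro b hb
  obtain ⟨a, rfl⟩ := hQs b
  apply ContinuousAt.continuousWithinAt
  rw [continuousAt_def]
  intro V hV
  obtain ⟨V', hsub, hV'o, hmem⟩ := mem_nhds_iff.1 hV
  have hW : IsOpen ((Q ⁻¹' T) ∩ (g ∘ Q) ⁻¹' V') :=
    h.isOpen_inter_preimage (hT.preimage hQc) hV'o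
  refine mem_nhds_iff.2 ⟨Q '' ((Q ⁻¹' T) ∩ (g ∘ Q) ⁻¹' V'), ?_, hQo _ hW, ⟨a, ⟨hb, hmem⟩, rfl⟩⟩
  rintro x ⟨a', ⟨-, ha'⟩, rfl⟩
  exact hsub ha'

/-- Reduction of an integer modulo `n`, as an element of `Fin n`. -/
private def toFin (n : ℕ) (hn : 0 < n) (m : ℤ) : Fin n :=
  ⟨(m % (n : ℤ)).toNat, by
    have h1 : 0 ≤ m % (n : ℤ) := Int.emod_nonneg m (by exact_mod_cast hn.ne')
    have h2 : m % (n : ℤ) < (n : ℤ) := Int.emod_lt_of_pos m (by exact_mod_cast hn)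
    omega⟩

private lemma toFin_cast (n : ℕ) (hn : 0 < n) (m : ℤ) :
    (((toFin n hn m) : ℕ) : ℤ) = m % (n : ℤ) := by
  have h1 : 0 ≤ m % (n : ℤ) := Int.emod_nonneg m (by exact_mod_cast hn.ne')
  simp [toFin, Int.toNat_of_nonneg h1]

private lemma dvd_sub_toFin (n : ℕ) (hn : 0 < n) (m : ℤ) :
    (n : ℤ) ∣ m - ((toFin n hn m : ℕ) : ℤ) := by
  rw [toFin_cast n hn m]
  exact ⟨m / (n : ℤ), by rw [Int.emod_def]; ring⟩

private lemma toFin_sub_mul (n : ℕ) (hn : 0 < n) (m j : ℤ) :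
    toFin n hn (m - (n : ℤ) * j) = toFin n hn m := by
  apply Fin.ext
  show ((m - (n : ℤ) * j) % (n : ℤ)).toNat = (m % (n : ℤ)).toNat
  have h0 : m - (n : ℤ) * j = m + (n : ℤ) * (-j) := by ring
  rw [h0, Int.add_mul_emod_self_left]

private lemma toFin_natCast (n : ℕ) (hn : 0 < n) (k : Fin n) :
    toFin n hn ((k : ℕ) : ℤ) = k := by
  apply Fin.ext
  show (((k : ℕ) : ℤ) % (n : ℤ)).toNat = (k : ℕ)
  rw [Int.emod_eq_of_lt (by positivity) (by exact_mod_cast k.isLt)]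
  exact Int.toNat_natCast _

variable (n : ℕ)

/-- The natural map `(M × ℝ)/(nℤ) → M_f`. -/
private def Fmap : Quot (mtRelN f n) → Quot (mtRel f) :=
  Quot.lift (Quot.mk (mtRel f)) (fun p q h => by
    obtain ⟨m, hm⟩ := h
    exact Quot.sound ⟨(n : ℤ) * m, hm⟩)

private lemma continuous_Fmap : Continuous (Fmap f n) :=
  continuous_quot_lift _ continuous_quot_mk

variable (hn : 0 < n) (t : ℝ)

/-- The slab `M × (t - 1/2, t + 1/2)`. -/
private def Sl : Set (M × ℝ) := Prod.snd ⁻¹' Ioo (t - 2⁻¹) (t + 2⁻¹)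

private lemma isOpen_Sl : IsOpen (Sl (M := M) t) := isOpen_Ioo.preimage continuous_snd

/-- The base set of the trivialization. -/
private def Ub : Set (Quot (mtRel f)) := Quot.mk (mtRel f) '' Sl t

private lemma isOpen_Ub : IsOpen (Ub f t) := isOpenMap_mkX f _ (isOpen_Sl t)

/-- Points whose image lies in the base set are exactly those with non-integral
shifted coordinate. -/
private lemma mem_Ub_iff (p : M × ℝ) :
    Quot.mk (mtRel f) p ∈ Ub f t ↔ ((⌊p.2 - t + 2⁻¹⌋ : ℤ) : ℝ) < p.2 - t + 2⁻¹ := by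
  constructor
  · rintro ⟨q, hq, hEq⟩
    obtain ⟨m, rfl⟩ := (mtRel_iff f q p).1 ((mkX_eq f).1 hEq)
    have hq1 : t - 2⁻¹ < q.2 := hq.1
    have hq2 : q.2 < t + 2⁻¹ := hq.2
    have h2 : (shiftH f m q).2 = q.2 - (m : ℝ) := shiftH_snd f m q
    have hfl : ⌊(shiftH f m q).2 - t + 2⁻¹⌋ = -m := by
      rw [Int.floor_eq_iff, h2]
      constructor
      · push_cast; linarith
      · push_cast; linarith
    rw [hfl, h2]
    push_cast
    linarith
  · intro h
    set m₀ := ⌊p.2 - t + 2⁻¹⌋ with hm₀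
    have hub : p.2 - t + 2⁻¹ < (m₀ : ℝ) + 1 := Int.lt_floor_add_one _
    refine ⟨shiftH f m₀ p, ?_, mkX_shiftH f m₀ p⟩
    show (shiftH f m₀ p).2 ∈ Ioo (t - 2⁻¹) (t + 2⁻¹)
    rw [shiftH_snd]
    constructor
    · linarith
    · linarith

/-- The preimage of the base set in `M × ℝ`. -/
private def Wset : Set (M × ℝ) := {p | ((⌊p.2 - t + 2⁻¹⌋ : ℤ) : ℝ) < p.2 - t + 2⁻¹}

/-- The forward map of the trivialization. -/
private noncomputable def trivFun : Quot (mtRelN f n) → Quot (mtRel f) × Fin n :=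
  Quot.lift (fun p => (Quot.mk (mtRel f) p, toFin n hn ⌊p.2 - t + 2⁻¹⌋))
    (fun p q h => by
      obtain ⟨m, rfl⟩ := (mtRelN_iff f n p q).1 h
      refine Prod.ext ?_ ?_
      · exact (mkX_shiftH f _ p).symm
      · show toFin n hn ⌊p.2 - t + 2⁻¹⌋ =
           toFin n hn ⌊(shiftH f ((n : ℤ) * m) p).2 - t + 2⁻¹⌋
        have h2 : (shiftH f ((n : ℤ) * m) p).2 - t + 2⁻¹ =
            (p.2 - t + 2⁻¹) - (((n : ℤ) * m : ℤ) : ℝ) := by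
          rw [shiftH_snd]; ring
        rw [h2, Int.floor_sub_intCast]
        exact (toFin_sub_mul n hn _ m).symm)

private lemma trivFun_mk (p : M × ℝ) :
    trivFun f n hn t (Quot.mk (mtRelN f n) p) =
      (Quot.mk (mtRel f) p, toFin n hn ⌊p.2 - t + 2⁻¹⌋) := rfl

private lemma trivFun_fst (e : Quot (mtRelN f n)) :
    (trivFun f n hn t e).1 = Fmap f n e := by
  induction e using Quot.ind with
  | _ p => rfl

/-- The inverse map of the trivialization. -/
private noncomputable def trivInv : Quot (mtRel f) × Fin n → Quot (mtRelN f n) :=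
  fun zk =>
    Quot.mk (mtRelN f n)
      (shiftH f (⌊(Quot.out zk.1).2 - t + 2⁻¹⌋ - ((zk.2 : ℕ) : ℤ)) (Quot.out zk.1))

private lemma trivInv_mk (p : M × ℝ) (k : Fin n) :
    trivInv f n t (Quot.mk (mtRel f) p, k) =
      Quot.mk (mtRelN f n) (shiftH f (⌊p.2 - t + 2⁻¹⌋ - ((k : ℕ) : ℤ)) p) := by
  set o := Quot.out (Quot.mk (mtRel f) p) with ho
  have hrel : Quot.mk (mtRel f) o = Quot.mk (mtRel f) p := Quot.out_eq _
  obtain ⟨m, hm⟩ := (mtRel_iff f o p).1 ((mkX_eq f).1 hrel)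
  show Quot.mk (mtRelN f n) (shiftH f (⌊o.2 - t + 2⁻¹⌋ - ((k : ℕ) : ℤ)) o) = _
  rw [← hm]
  have h2 : (shiftH f m o).2 - t + 2⁻¹ = (o.2 - t + 2⁻¹) - (m : ℝ) := by
    rw [shiftH_snd]; ring
  rw [h2, Int.floor_sub_intCast, shiftH_shiftH]
  congr 2
  ring_nf

/-- The trivialization of `Fmap` over the image of the slab at height `t`. -/
private noncomputable def triv : Bundle.Trivialization (Fin n) (Fmap f n) where
  toOpenPartialHomeomorph :=
    { toFun := trivFun f n hn t
      invFun := trivInv f n t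
      source := Fmap f n ⁻¹' Ub f t
      target := Ub f t ×ˢ univ
      map_source' := by
        intro e he
        induction e using Quot.ind with
        | _ p => exact ⟨he, trivial⟩
      map_target' := by
        rintro ⟨z, k⟩ ⟨hz, -⟩
        induction z using Quot.ind with
        | _ p =>
          rw [mem_preimage, trivInv_mk]
          show Quot.mk (mtRel f) _ ∈ Ub f t
          rw [mkX_shiftH]
          exact hz
      left_inv' := by
        intro e _
        induction e using Quot.ind with
        | _ p =>
          rw [trivFun_mk, trivInv_mk]
          exact mkE_shiftH f n _ (dvd_sub_toFin n hn _) p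
      right_inv' := by
        rintro ⟨z, k⟩ ⟨hz, -⟩
        induction z using Quot.ind with
        | _ p =>
          rw [trivInv_mk, trivFun_mk]
          refine Prod.ext ?_ ?_
          · exact mkX_shiftH f _ p
          · show toFin n hn ⌊(shiftH f (⌊p.2 - t + 2⁻¹⌋ - ((k : ℕ) : ℤ)) p).2 - t + 2⁻¹⌋ = k
            have h2 : (shiftH f (⌊p.2 - t + 2⁻¹⌋ - ((k : ℕ) : ℤ)) p).2 - t + 2⁻¹ =
                (p.2 - t + 2⁻¹) - ((⌊p.2 - t + 2⁻¹⌋ - ((k : ℕ) : ℤ) : ℤ) : ℝ) := by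
              rw [shiftH_snd]; ring
            rw [h2, Int.floor_sub_intCast]
            have h3 : ⌊p.2 - t + 2⁻¹⌋ - (⌊p.2 - t + 2⁻¹⌋ - ((k : ℕ) : ℤ)) = ((k : ℕ) : ℤ) := by
              ring
            rw [h3, toFin_natCast]
      open_source := (isOpen_Ub f t).preimage (continuous_Fmap f n)
      open_target := (isOpen_Ub f t).prod isOpen_univ
      continuousOn_toFun := by
        apply contOn_of_comp continuous_quot_mk (isOpenMap_mkE f n)
          (fun e => Quot.exists_rep e) ((isOpen_Ub f t).preimage (continuous_Fmap f n))
        have hset : Quot.mk (mtRelN f n) ⁻¹' (Fmap f n ⁻¹' Ub f t) = Wset t := by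
          ext p
          exact mem_Ub_iff f t p
        rw [hset]
        intro p hp
        apply ContinuousAt.continuousWithinAt
        set m₀ := ⌊p.2 - t + 2⁻¹⌋ with hm₀
        have hN : (fun q : M × ℝ => q.2 - t + 2⁻¹) ⁻¹' Ioo (m₀ : ℝ) ((m₀ : ℝ) + 1) ∈ nhds p :=
          (isOpen_Ioo.preimage ((continuous_snd.sub continuous_const).add continuous_const)).mem_nhds ⟨hp, Int.lt_floor_add_one _⟩
        have hcongr : (fun q : M × ℝ =>
            ((Quot.mk (mtRel f) q, toFin n hn m₀) : Quot (mtRel f) × Fin n))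
            =ᶠ[nhds p] (trivFun f n hn t ∘ Quot.mk (mtRelN f n)) := by
          filter_upwards [hN] with q hq
          have hfl : ⌊q.2 - t + 2⁻¹⌋ = m₀ := by
            rw [Int.floor_eq_iff]
            exact ⟨hq.1.le, hq.2⟩
          show _ = (Quot.mk (mtRel f) q, toFin n hn ⌊q.2 - t + 2⁻¹⌋)
          rw [hfl]
        exact ContinuousAt.congr
          ((continuous_quot_mk.prodMk continuous_const).continuousAt) hcongr
      continuousOn_invFun := by
        have hsurj : Function.Surjective (Quot.mk (mtRel f)) := fun z => Quot.exists_rep z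
        apply contOn_of_comp (continuous_quot_mk.prodMap continuous_id)
          ((isOpenMap_mkX f).prodMap IsOpenMap.id)
          (hsurj.prodMap Function.surjective_id)
          ((isOpen_Ub f t).prod isOpen_univ)
        rintro ⟨p, k⟩ ha
        have hp : ((⌊p.2 - t + 2⁻¹⌋ : ℤ) : ℝ) < p.2 - t + 2⁻¹ :=
          (mem_Ub_iff f t p).1 ha.1
        apply ContinuousAt.continuousWithinAt
        set m₀ := ⌊p.2 - t + 2⁻¹⌋ with hm₀
        have hopen : IsOpen (((fun q : (M × ℝ) × Fin n => q.1.2 - t + 2⁻¹) ⁻¹'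
            Ioo (m₀ : ℝ) ((m₀ : ℝ) + 1)) ∩ (Prod.snd ⁻¹' ({k} : Set (Fin n)))) :=
          (isOpen_Ioo.preimage (((continuous_snd.comp continuous_fst).sub
            continuous_const).add continuous_const)).inter
            ((isOpen_discrete _).preimage continuous_snd)
        have hN : (((fun q : (M × ℝ) × Fin n => q.1.2 - t + 2⁻¹) ⁻¹'
            Ioo (m₀ : ℝ) ((m₀ : ℝ) + 1)) ∩ (Prod.snd ⁻¹' ({k} : Set (Fin n)))) ∈
              nhds ((p, k) : (M × ℝ) × Fin n) :=
          hopen.mem_nhds ⟨⟨hp, Int.lt_floor_add_one _⟩, rfl⟩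
        have hcongr : (fun b : (M × ℝ) × Fin n =>
            Quot.mk (mtRelN f n) (shiftH f (m₀ - ((k : ℕ) : ℤ)) b.1))
            =ᶠ[nhds ((p, k) : (M × ℝ) × Fin n)]
              (trivInv f n t ∘ Prod.map (Quot.mk (mtRel f)) id) := by
          filter_upwards [hN] with b hb
          have hb2 : b.2 = k := hb.2
          have hfl : ⌊b.1.2 - t + 2⁻¹⌋ = m₀ := by
            rw [Int.floor_eq_iff]
            exact ⟨hb.1.1.le, hb.1.2⟩
          show _ = trivInv f n t (Quot.mk (mtRel f) b.1, b.2)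
          rw [trivInv_mk, hfl, hb2]
        exact ContinuousAt.congr
          ((continuous_quot_mk.comp
            ((shiftH f (m₀ - ((k : ℕ) : ℤ))).continuous.comp continuous_fst)).continuousAt)
          hcongr }
  baseSet := Ub f t
  open_baseSet := isOpen_Ub f t
  source_eq := rfl
  target_eq := rfl
  proj_toFun := fun e _ => trivFun_fst f n hn t e

private lemma mem_Ub_self (p : M × ℝ) : Quot.mk (mtRel f) p ∈ Ub f p.2 := by
  refine ⟨p, ?_, rfl⟩
  show p.2 ∈ Ioo (p.2 - 2⁻¹) (p.2 + 2⁻¹)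
  have h2 : (0 : ℝ) < 2⁻¹ := by norm_num
  exact ⟨by linarith, by linarith⟩

end Aux

/-- For `n ≥ 1`, the natural map `(M × ℝ)/(nℤ) → M_f` induced by the
identity of `M × ℝ` is a covering map and each of its fibers has exactly `n` elements. -/
theorem intermediate_quotient_is_n_fold_covering
    (M : Type*) [TopologicalSpace M] (f : M ≃ₜ M) (n : ℕ) (hn : 1 ≤ n) :
    ∃ F : Quot (mtRelN f n) → Quot (mtRel f),
      (∀ p : M × ℝ, F (Quot.mk (mtRelN f n) p) = Quot.mk (mtRel f) p) ∧
      IsCoveringMap F ∧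
      ∀ z : Quot (mtRel f), Nat.card (F ⁻¹' {z}) = n := by
  have hn' : 0 < n := hn
  refine ⟨Fmap f n, fun p => rfl, ?_, ?_⟩
  · apply IsFiberBundle.isCoveringMap (F := Fin n)
    intro z
    induction z using Quot.ind with
    | _ p => exact ⟨triv f n hn' p.2, mem_Ub_self f p⟩
  · intro z
    induction z using Quot.ind with
    | _ p =>
      have hz : Quot.mk (mtRel f) p ∈ (triv f n hn' p.2).baseSet := mem_Ub_self f p
      have hcard := Nat.card_congr
        ((triv f n hn' p.2).preimageSingletonHomeomorph hz).toEquiv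
      rw [hcard]
      simp
end
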